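/- Let K be a field of characteristic zero, U an associative K-algebra with elements f, x satisfying [x,f] = 1 (so x·f − f·x = 1 acting on the right appropriately), M a right U-module, and v ∈ M with v·f^{N+1} = 0 for some N. Define e_j(v) := Σ_{n=j}^N v·(f^n/n!)·C(n,j)·(−x)^{n−j}. Then e_j(v)·f = 0 for every j ≥ 0, i.e. each e_j(v) is annihilated by f. -/

import Mathlib

open MulOpposite

/-- Commutation: `(-x)^(k+1) * f = f * (-x)^(k+1) - (k+1) • (-x)^k` when `[x,f]=1`. -/
lemma neg_x_pow_mul_f {U : Type*} [Ring U] (f x : U) (hfx : x * f - f * x = 1) :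
    ∀ k : ℕ, (-x) ^ (k + 1) * f = f * (-x) ^ (k + 1) - (k + 1 : ℕ) • (-x) ^ k := by
  have h2 : -x * f = f * -x - 1 := by
    have : x * f = f * x + 1 := by rw [← hfx]; abel
    rw [neg_mul, this, mul_neg]; abel
  intro k
  induction k with
  | zero =>
    simpa [pow_one] using h2
  | succ k ih =>
    rw [pow_succ' (-x) (k + 1), mul_assoc, ih, mul_sub, ← mul_assoc, h2, mul_smul_comm,
      ← pow_succ' (-x) k, sub_mul, one_mul, mul_assoc, ← pow_succ' (-x) (k + 1),
      succ_nsmul]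
    module

/-- let `K` be a field of characteristic zero, `U` a `K`-algebra with
elements `f`, `x` satisfying `[x,f] = 1`, `M` a right `U`-module (a left
`Uᵐᵒᵖ`-module) and `v ∈ M` with `v·f^{N+1} = 0`. Define
`e_j(v) = Σ_{n=j}^N v·(f^n/n!)·C(n,j)·(−x)^{n−j}`. Then `e_j(v)·f = 0` for every
`j ≥ 0`. -/
theorem e_j_killed_by_f {K U M : Type*} [Field K] [CharZero K]
    [Ring U] [Algebra K U] [AddCommGroup M] [Module Uᵐᵒᵖ M]
    [Module K M] [IsScalarTower K Uᵐᵒᵖ M]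
    (f x : U) (hfx : x * f - f * x = 1)
    (N : ℕ) (v : M) (hv : op (f ^ (N + 1)) • v = 0) :
    ∀ j : ℕ, op f •
      (∑ n ∈ Finset.Icc j N, ((n.factorial : K)⁻¹ * (n.choose j : K)) •
        (op ((-x) ^ (n - j)) • (op (f ^ n) • v))) = 0 := by
  intro j
  -- `w u = v · u`
  set w : U → M := fun u => op u • v with hwdef
  have hw0 : ∀ a : U, w (f ^ (N + 1) * a) = 0 := by
    intro a
    show op (f ^ (N + 1) * a) • v = 0
    rw [op_mul, mul_smul, hv, smul_zero]
  have hwsub : ∀ a b : U, w (a - b) = w a - w b := by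
    intro a b; show op (a - b) • v = _; rw [op_sub, sub_smul]
  have hwns : ∀ (m : ℕ) (a : U), w (m • a) = m • w a := by
    intro m a; show op (m • a) • v = _
    rw [op_smul, smul_assoc]
  -- rewrite the left-hand side as a single sum of `w` of ring elements
  have key : op f • (∑ n ∈ Finset.Icc j N, ((n.factorial : K)⁻¹ * (n.choose j : K)) •
        (op ((-x) ^ (n - j)) • (op (f ^ n) • v)))
      = ∑ n ∈ Finset.Icc j N, ((n.factorial : K)⁻¹ * (n.choose j : K)) •
        w (f ^ n * (-x) ^ (n - j) * f) := by
    rw [Finset.smul_sum]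
    refine Finset.sum_congr rfl fun n _ => ?_
    rw [smul_comm]
    congr 1
    show op f • (op ((-x) ^ (n - j)) • (op (f ^ n) • v)) = op (f ^ n * (-x) ^ (n - j) * f) • v
    rw [← mul_smul, ← mul_smul, ← op_mul, ← op_mul, mul_assoc]
  rw [key]
  -- the telescoping function
  set d : ℕ → M := fun n => if n ≤ j then 0 else
      (((n - 1).factorial : K)⁻¹ * ((n - 1).choose j : K)) • w (f ^ n * (-x) ^ (n - 1 - j))
    with hddef
  have hdj : d j = 0 := by simp [hddef]
  -- per-term identity
  have hterm : ∀ n ∈ Finset.Icc j N, ((n.factorial : K)⁻¹ * (n.choose j : K)) •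
      w (f ^ n * (-x) ^ (n - j) * f) = d (n + 1) - d n := by
    intro n hn
    rw [Finset.mem_Icc] at hn
    rcases eq_or_lt_of_le hn.1 with h | h
    · -- n = j
      subst h
      rw [hdj, sub_zero]
      simp only [hddef]
      rw [if_neg (by omega)]
      simp [Nat.sub_self, pow_succ]
    · -- j < n
      obtain ⟨k, hk⟩ : ∃ k, n - j = k + 1 := ⟨n - j - 1, by omega⟩
      have hk2 : n - 1 - j = k := by omega
      have hring : f ^ n * (-x) ^ (n - j) * f
          = f ^ (n + 1) * (-x) ^ (k + 1) - (k + 1 : ℕ) • (f ^ n * (-x) ^ k) := by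
        rw [hk, mul_assoc, neg_x_pow_mul_f f x hfx k, mul_sub, mul_smul_comm, ← mul_assoc,
          ← pow_succ]
      have hd1 : d (n + 1) = ((n.factorial : K)⁻¹ * (n.choose j : K)) •
          w (f ^ (n + 1) * (-x) ^ (k + 1)) := by
        simp only [hddef]
        rw [if_neg (by omega)]
        simp only [Nat.add_sub_cancel]
        rw [hk]
      have hd2 : d n = (((n - 1).factorial : K)⁻¹ * ((n - 1).choose j : K)) •
          w (f ^ n * (-x) ^ k) := by
        simp only [hddef]
        rw [if_neg (by omega), hk2]
      rw [hring, hwsub, hwns, smul_sub, hd1, hd2]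
      congr 1
      rw [smul_comm, ← Nat.cast_smul_eq_nsmul K, smul_smul]
      congr 1
      -- scalar identity: (k+1) * (n!⁻¹ * C(n,j)) = (n-1)!⁻¹ * C(n-1,j)
      have hjn : j ≤ n - 1 := by omega
      have h1 : ((n.choose j : K)) = (n.factorial : K) / (j.factorial * (n - j).factorial) :=
        Nat.cast_choose K hn.1
      have h2 : (((n - 1).choose j : K))
          = ((n - 1).factorial : K) / (j.factorial * (n - 1 - j).factorial) :=
        Nat.cast_choose K hjn
      have hfacn : (n.factorial : K) = (n : K) * ((n - 1).factorial : K) := by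
        have : n = (n - 1) + 1 := by omega
        rw [this, Nat.factorial_succ]
        push_cast
        congr 2
      have hfac : ((n - j).factorial : K) = ((k : K) + 1) * ((n - 1 - j).factorial : K) := by
        rw [hk, hk2, Nat.factorial_succ]
        push_cast
        ring
      rw [h1, h2, hfac, hfacn, hk2]
      have e2 : ((n - 1).factorial : K) ≠ 0 := Nat.cast_ne_zero.2 (n - 1).factorial_ne_zero
      have e3 : (j.factorial : K) ≠ 0 := Nat.cast_ne_zero.2 j.factorial_ne_zero
      have e4 : ((k).factorial : K) ≠ 0 := Nat.cast_ne_zero.2 (k).factorial_ne_zero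
      have e5 : ((k : K) + 1) ≠ 0 := by
        exact_mod_cast (Nat.cast_ne_zero (R := K)).2 k.succ_ne_zero
      have e6 : (n : K) ≠ 0 := Nat.cast_ne_zero.2 (by omega)
      push_cast
      field_simp
  rw [Finset.sum_congr rfl hterm]
  -- telescoping
  have tel : ∀ m : ℕ, j ≤ m → ∑ n ∈ Finset.Ico j m, (d (n + 1) - d n) = d m - d j := by
    intro m hm
    induction m, hm using Nat.le_induction with
    | base => simp
    | succ m hm ih => rw [Finset.sum_Ico_succ_top hm, ih]; abel
  have hicc : Finset.Icc j N = Finset.Ico j (N + 1) := by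
    ext t; simp [Nat.lt_succ_iff]
  rcases le_or_gt j N with hjN | hjN
  · rw [hicc, tel (N + 1) (by omega), hdj, sub_zero]
    simp only [hddef]
    rw [if_neg (by omega)]
    simp only [Nat.add_sub_cancel]
    rw [hw0, smul_zero]
  · rw [Finset.Icc_eq_empty (by omega), Finset.sum_empty]
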